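/- Let n be an even positive integer and γ a positive real algebraic number such that ξ := √(−γ) = i·√γ has degree greater than n over ℚ. Then the space V_n(1,ξ) of rational polynomials f of degree at most n with f(ξ) ∈ ℝ is exactly the space of even polynomials of degree at most n, and hence has dimension (n+2)/2. -/

import Mathlib

open Polynomial

/-- The ℚ-vector space of polynomials `f ∈ ℚ[X]` of degree at most `n`
with `μ * f(ξ) ∈ ℝ`. -/
noncomputable def Vspace (n : ℕ) (μ ξ : ℂ) : Submodule ℚ ℚ[X] where
  carrier := {f | f.natDegree ≤ n ∧ ∃ r : ℝ, μ * aeval ξ f = (r : ℂ)}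
  zero_mem' := ⟨by simp, 0, by simp⟩
  add_mem' := by
    rintro f g ⟨hf, r, hr⟩ ⟨hg, s, hs⟩
    refine ⟨(natDegree_add_le f g).trans (by simp [hf, hg]), r + s, ?_⟩
    push_cast
    rw [map_add, mul_add, hr, hs]
  smul_mem' := by
    rintro c f ⟨hf, r, hr⟩
    refine ⟨(natDegree_smul_le c f).trans hf, c * r, ?_⟩
    rw [map_smul, Algebra.mul_smul_comm, hr, Rat.smul_def]
    push_cast
    ring

/-- `t_n(ξ)`: the maximum over nonzero `μ ∈ ℂ` of `dim_ℚ V_n(μ,ξ)`. -/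
noncomputable def tdeg (n : ℕ) (ξ : ℂ) : ℕ :=
  sSup {d : ℕ | ∃ μ : ℂ, μ ≠ 0 ∧ d = Module.finrank ℚ (Vspace n μ ξ)}

/-- The space of even rational polynomials of degree at most n. -/
noncomputable def evenPolySpace (n : ℕ) : Submodule ℚ ℚ[X] where
  carrier := {f | f.natDegree ≤ n ∧ ∀ i, Odd i → f.coeff i = 0}
  zero_mem' := ⟨by simp, by simp⟩
  add_mem' := by
    rintro f g ⟨hf, hf'⟩ ⟨hg, hg'⟩
    exact ⟨(natDegree_add_le f g).trans (by simp [hf, hg]),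
      fun i hi => by simp [coeff_add, hf' i hi, hg' i hi]⟩
  smul_mem' := by
    rintro c f ⟨hf, hf'⟩
    exact ⟨(natDegree_smul_le c f).trans hf,
      fun i hi => by simp [coeff_smul, hf' i hi]⟩


lemma coeff_comp_neg_X (f : ℚ[X]) (i : ℕ) :
    (f.comp (-X)).coeff i = (-1)^i * f.coeff i := by
  induction f using Polynomial.induction_on' with
  | add p q hp hq => simp [add_comp, hp, hq, mul_add]
  | monomial k c =>
      rw [← C_mul_X_pow_eq_monomial, mul_comp, C_comp, pow_comp, X_comp,
        show (-X : ℚ[X])^k = C ((-1)^k) * X^k by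
          rw [neg_pow (X : ℚ[X]) k]; simp, ← mul_assoc, ← C_mul, coeff_C_mul, coeff_C_mul]
      rcases eq_or_ne i k with rfl | h
      · simp [coeff_X_pow]; ring
      · simp [coeff_X_pow, h]

lemma expand_two_contract_two (g : ℚ[X]) (hg : ∀ i, Odd i → g.coeff i = 0) :
    expand ℚ 2 (contract 2 g) = g := by
  ext i
  rw [coeff_expand (by norm_num)]
  split_ifs with h
  · rw [coeff_contract (by norm_num), Nat.div_mul_cancel h]
  · exact (hg i (Nat.odd_iff.mpr (by omega))).symm

lemma even_eq_map_expand (n : ℕ) (hne : Even n) :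
    evenPolySpace n =
      Submodule.map ((Polynomial.expand ℚ 2).toLinearMap) (degreeLT ℚ (n/2 + 1)) := by
  ext g
  constructor
  · rintro ⟨hdeg, hodd⟩
    refine ⟨contract 2 g, ?_, expand_two_contract_two g hodd⟩
    rw [SetLike.mem_coe, mem_degreeLT]
    have h2 : (contract 2 g).natDegree * 2 = ((expand ℚ 2) (contract 2 g)).natDegree :=
      (natDegree_expand 2 _).symm
    rw [expand_two_contract_two g hodd] at h2
    have : (contract 2 g).natDegree ≤ n / 2 := by omega
    calc (contract 2 g).degree ≤ ((contract 2 g).natDegree : WithBot ℕ) := degree_le_natDegree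
      _ < ((n/2 + 1 : ℕ) : WithBot ℕ) := by exact_mod_cast Nat.lt_succ_of_le this
  · rintro ⟨f, hf, rfl⟩
    rw [SetLike.mem_coe, mem_degreeLT] at hf
    have hd : f.natDegree ≤ n / 2 := by
      rcases eq_or_ne f 0 with rfl | h0
      · simp
      · have := (natDegree_lt_iff_degree_lt h0).mpr hf
        omega
    constructor
    · rw [AlgHom.toLinearMap_apply, natDegree_expand]
      have : n / 2 * 2 = n := Nat.div_mul_cancel hne.two_dvd
      omega
    · intro i hi
      rw [AlgHom.toLinearMap_apply, coeff_expand (by norm_num), if_neg]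
      rw [Nat.odd_iff] at hi
      omega

theorem Vspace_sqrt_neg_eq_even_polys' (n : ℕ) (hn : 0 < n) (hne : Even n)
    (γ : ℝ) (hγ : 0 < γ) (hγalg : IsAlgebraic ℚ (γ : ℝ)) (ξ : ℂ)
    (hξ : ξ = Complex.I * (Real.sqrt γ : ℂ))
    (hξalg : IsAlgebraic ℚ ξ) (hdeg : n < (minpoly ℚ ξ).natDegree) :
    Vspace n 1 ξ = evenPolySpace n ∧
      2 * Module.finrank ℚ (Vspace n 1 ξ) = n + 2 := by
  have hconj : (starRingEnd ℂ) ξ = -ξ := by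
    rw [hξ]; simp [Complex.conj_I]
  have key : ∀ f : ℚ[X], (starRingEnd ℂ) (aeval ξ f) = aeval ξ (f.comp (-X)) := by
    intro f
    rw [aeval_comp, show (aeval ξ (-X : ℚ[X])) = -ξ by simp, ← hconj]
    exact (aeval_algHom_apply ((Complex.conjAe.toAlgHom).restrictScalars ℚ) ξ f).symm
  have heq : Vspace n 1 ξ = evenPolySpace n := by
    ext f
    constructor
    · rintro ⟨hf, r, hr⟩
      rw [one_mul] at hr
      refine ⟨hf, ?_⟩
      -- f(ξ) real so conj f(ξ) = f(ξ), i.e. (f.comp(-X) - f)(ξ) = 0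
      have hreal : (starRingEnd ℂ) (aeval ξ f) = aeval ξ f := by
        rw [hr]; exact Complex.conj_ofReal r
      have hzero : aeval ξ (f.comp (-X) - f) = 0 := by
        rw [map_sub, ← key f, hreal, sub_self]
      have hg0 : f.comp (-X) - f = 0 := by
        by_contra h0
        have hdvd : minpoly ℚ ξ ∣ f.comp (-X) - f := minpoly.dvd ℚ ξ hzero
        have hle := natDegree_le_of_dvd hdvd h0
        have h1 : (f.comp (-X)).natDegree ≤ n := by
          refine natDegree_comp_le.trans ?_
          simpa using Nat.mul_le_mul_right (-X : ℚ[X]).natDegree hf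
        have h2 : (f.comp (-X) - f).natDegree ≤ n :=
          (natDegree_sub_le _ _).trans (by omega)
        omega
      intro i hi
      have := congrArg (fun p => Polynomial.coeff p i) hg0
      simp only [coeff_sub, coeff_zero, coeff_comp_neg_X] at this
      rw [hi.neg_one_pow] at this
      linarith
    · rintro ⟨hf, hodd⟩
      refine ⟨hf, ?_⟩
      have hfix : f.comp (-X) = f := by
        ext i
        rw [coeff_comp_neg_X]
        rcases Nat.even_or_odd i with he | ho
        · rw [he.neg_one_pow, one_mul]
        · rw [hodd i ho, mul_zero]
      have : (starRingEnd ℂ) (aeval ξ f) = aeval ξ f := by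
        rw [key f, hfix]
      obtain ⟨r, hr⟩ := Complex.conj_eq_iff_real.mp this
      exact ⟨r, by rw [one_mul, hr]⟩
  refine ⟨heq, ?_⟩
  rw [heq, even_eq_map_expand n hne]
  have hinj : Function.Injective ((Polynomial.expand ℚ 2).toLinearMap) := by
    intro a b h
    exact Polynomial.expand_injective (by norm_num) h
  rw [← LinearEquiv.finrank_eq
    (Submodule.equivMapOfInjective _ hinj (degreeLT ℚ (n/2 + 1)))]
  rw [LinearEquiv.finrank_eq (Polynomial.degreeLTEquiv ℚ (n/2 + 1)),
    Module.finrank_fin_fun]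
  have : n / 2 * 2 = n := Nat.div_mul_cancel hne.two_dvd
  omega

theorem Vspace_sqrt_neg_eq_even_polys (n : ℕ) (hn : 0 < n) (hne : Even n)
    (γ : ℝ) (hγ : 0 < γ) (hγalg : IsAlgebraic ℚ (γ : ℝ)) (ξ : ℂ)
    (hξ : ξ = Complex.I * (Real.sqrt γ : ℂ))
    (hξalg : IsAlgebraic ℚ ξ) (hdeg : n < (minpoly ℚ ξ).natDegree) :
    Vspace n 1 ξ = evenPolySpace n ∧
      2 * Module.finrank ℚ (Vspace n 1 ξ) = n + 2 :=
  Vspace_sqrt_neg_eq_even_polys' n hn hne γ hγ hγalg ξ hξ hξalg hdeg
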